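/- In the setting above, if ∏_{j=1}^l u_j^{γ_j} = ∏_{j=1}^l γ_j^{γ_j}, then the hypersurface {F_u = 0} ⊂ (ℂ^×)^d has exactly one singular point. -/

import Mathlib

open Finset Matrix

lemma zpow_sum_aux {G : Type*} [CommGroup G] {ι : Type*} (a : G) (s : Finset ι)
    (f : ι → ℤ) : a ^ (∑ j ∈ s, f j) = ∏ j ∈ s, a ^ f j := by
  induction s using Finset.cons_induction with
  | empty => simp
  | cons j s hj ih => rw [Finset.sum_cons, Finset.prod_cons, _root_.zpow_add, ih]

lemma mon_sum_aux {d n : ℕ} (x : Fin d → ℂˣ) (c : Fin n → ℤ) (V : Fin n → Fin d → ℤ) :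
    (∏ i, x i ^ (∑ j, c j * V j i)) = ∏ j, (∏ i, x i ^ V j i) ^ c j := by
  calc (∏ i, x i ^ (∑ j, c j * V j i))
      = ∏ i, ∏ j, (x i ^ V j i) ^ c j := by
        refine Finset.prod_congr rfl fun i _ => ?_
        rw [zpow_sum_aux]
        exact Finset.prod_congr rfl fun j _ => by rw [← _root_.zpow_mul, mul_comm]
    _ = ∏ j, ∏ i, (x i ^ V j i) ^ c j := Finset.prod_comm
    _ = ∏ j, (∏ i, x i ^ V j i) ^ c j :=
        Finset.prod_congr rfl fun j _ => Finset.prod_zpow _ _ _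

lemma prod_zpow_single_aux {n : ℕ} (f : Fin n → ℂˣ) (k : Fin n) (c : ℤ) :
    (∏ j, f j ^ ((Pi.single k c : Fin n → ℤ) j)) = f k ^ c := by
  rw [Finset.prod_eq_single k (fun j _ hj => by simp [Pi.single_eq_of_ne hj]) (by simp),
    Pi.single_eq_same]

lemma span_kill_aux {d n : ℕ} (x : Fin d → ℂˣ) (V : Fin n → Fin d → ℤ)
    (hspan : Submodule.span ℤ (Set.range V) = ⊤)
    (h1 : ∀ j, (∏ i, x i ^ V j i) = 1) (i0 : Fin d) : x i0 = 1 := by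
  have hmem : (Pi.single i0 (1 : ℤ) : Fin d → ℤ) ∈ Submodule.span ℤ (Set.range V) := by
    rw [hspan]; trivial
  obtain ⟨c, hc⟩ := (Submodule.mem_span_range_iff_exists_fun ℤ).mp hmem
  have key : (∏ i, x i ^ ((Pi.single i0 (1 : ℤ) : Fin d → ℤ) i)) = 1 := by
    rw [← hc]
    have : ∀ i, (∑ j, c j • V j) i = ∑ j, c j * V j i := by
      intro i; simp [Finset.sum_apply]
    calc (∏ i, x i ^ ((∑ j, c j • V j) i)) = ∏ i, x i ^ (∑ j, c j * V j i) := by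
          exact Finset.prod_congr rfl fun i _ => by rw [this]
      _ = ∏ j, (∏ i, x i ^ V j i) ^ c j := mon_sum_aux x c V
      _ = 1 := by simp [h1]
  rwa [prod_zpow_single_aux, zpow_one] at key

lemma ker_aux {d : ℕ} (γ : Fin (d + 2) → ℤ) (hγ0 : ∀ j, γ j ≠ 0)
    (m : Fin (d + 2) → Fin d → ℤ)
    (hrel : ∀ r : Fin (d + 2) → ℤ,
      ((∑ j, r j = 0) ∧ (∀ i, ∑ j, r j * m j i = 0)) ↔ ∃ c : ℤ, r = c • γ)
    (t : Fin (d + 2) → ℂ) (h1 : ∑ j, t j = 0) (h2 : ∀ i, ∑ j, t j * m j i = 0) :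
    ∃ c : ℂ, ∀ j, t j = c * γ j := by
  obtain ⟨hγsum, hγm⟩ := (hrel γ).mpr ⟨1, by simp⟩
  set M : Matrix (Fin (d + 1)) (Fin (d + 1)) ℤ :=
    Matrix.of fun j i => (Fin.cons (1 : ℤ) (m j.succ) : Fin (d+1) → ℤ) i with hM
  have hker : ∀ v : Fin (d + 1) → ℤ, v ᵥ* M = 0 → v = 0 := by
    intro v hv
    set r : Fin (d + 2) → ℤ := Fin.cons 0 v with hr
    have hvM : ∀ i, ∑ j, v j * M j i = 0 := by
      intro i
      have := congrFun hv i
      simpa [Matrix.vecMul, dotProduct] using this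
    have h1' : ∑ j, r j = 0 := by
      have := hvM 0
      simpa [hr, Fin.sum_univ_succ, hM] using this
    have h2' : ∀ i, ∑ j, r j * m j i = 0 := by
      intro i
      have := hvM i.succ
      simpa [hr, Fin.sum_univ_succ, hM] using this
    obtain ⟨c, hc⟩ := (hrel r).mp ⟨h1', h2'⟩
    have hc0 : c = 0 := by
      have := congrFun hc 0
      simp [hr] at this
      rcases this with h | h
      · exact h
      · exact absurd h (hγ0 0)
    funext j
    have := congrFun hc j.succ
    simp [hr, hc0] at this
    simpa using this
  have hdet : M.det ≠ 0 := by
    intro h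
    obtain ⟨v, hv0, hv⟩ := Matrix.exists_vecMul_eq_zero_iff.mpr h
    exact hv0 (hker v hv)
  have hdetC : (M.map (Int.cast : ℤ → ℂ)).det ≠ 0 := by
    have : (M.map (Int.cast : ℤ → ℂ)).det = ((M.det : ℤ) : ℂ) := by
      simpa using (RingHom.map_det (Int.castRingHom ℂ) M).symm
    rw [this]
    exact_mod_cast hdet
  have hkerC : ∀ v : Fin (d + 1) → ℂ, v ᵥ* (M.map (Int.cast : ℤ → ℂ)) = 0 → v = 0 := by
    intro v hv
    by_contra hv0
    exact hdetC (Matrix.exists_vecMul_eq_zero_iff.mp ⟨v, hv0, hv⟩)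
  set s : Fin (d + 2) → ℂ := fun j => (γ 0 : ℂ) * t j - t 0 * (γ j : ℂ) with hs
  have hγsumC : ∑ j, (γ j : ℂ) = 0 := by exact_mod_cast congrArg (Int.cast : ℤ → ℂ) hγsum
  have hγmC : ∀ i, ∑ j, (γ j : ℂ) * (m j i : ℂ) = 0 := by
    intro i
    have := hγm i
    exact_mod_cast congrArg (Int.cast : ℤ → ℂ) this
  have hs1 : ∑ j, s j = 0 := by
    simp only [hs]
    rw [Finset.sum_sub_distrib, ← Finset.mul_sum, ← Finset.mul_sum, h1, hγsumC]
    ring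
  have hs2 : ∀ i, ∑ j, s j * (m j i : ℂ) = 0 := by
    intro i
    simp only [hs]
    have : ∀ j, ((γ 0 : ℂ) * t j - t 0 * (γ j : ℂ)) * (m j i : ℂ)
        = (γ 0 : ℂ) * (t j * (m j i : ℂ)) - t 0 * ((γ j : ℂ) * (m j i : ℂ)) := by
      intro j; ring
    rw [Finset.sum_congr rfl fun j _ => this j, Finset.sum_sub_distrib,
      ← Finset.mul_sum, ← Finset.mul_sum, h2 i, hγmC i]
    ring
  have hs0 : s 0 = 0 := by simp [hs]; ring
  have hv : (fun j : Fin (d + 1) => s j.succ) ᵥ* (M.map (Int.cast : ℤ → ℂ)) = 0 := by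
    funext i
    have expand : ((fun j : Fin (d + 1) => s j.succ) ᵥ* (M.map (Int.cast : ℤ → ℂ))) i
        = ∑ j : Fin (d + 1), s j.succ * ((M j i : ℤ) : ℂ) := by
      simp [Matrix.vecMul, dotProduct]
    show ((fun j : Fin (d + 1) => s j.succ) ᵥ* (M.map (Int.cast : ℤ → ℂ))) i = 0
    rw [expand]
    refine Fin.cases ?_ ?_ i
    · have := hs1
      rw [Fin.sum_univ_succ, hs0, zero_add] at this
      simpa [hM] using this
    · intro i'
      have := hs2 i'
      rw [Fin.sum_univ_succ, hs0, zero_mul, zero_add] at this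
      simpa [hM] using this
  have hsz : ∀ j, s j = 0 := by
    have := hkerC _ hv
    intro j
    refine Fin.cases hs0 (fun j' => ?_) j
    exact congrFun this j'
  refine ⟨t 0 / (γ 0 : ℂ), fun j => ?_⟩
  have hγ0C : (γ 0 : ℂ) ≠ 0 := Int.cast_ne_zero.mpr (hγ0 0)
  have := hsz j
  simp only [hs, sub_eq_zero] at this
  field_simp
  linear_combination this

/-- **Unique singular point on the discriminant.**
In the setting of the circuit hypersurface `{F_u = 0} ⊂ (ℂ^×)^d`, if
`∏ u_j^{γ_j} = ∏ γ_j^{γ_j}`, then there is exactly one singular point, i.e.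
exactly one `x` in the torus with `F_u(x) = 0` and all logarithmic partials
`∑_j m_{ij} u_j x^{m_j}` vanishing. -/
theorem circuit_unique_singular_point (d : ℕ) (γ : Fin (d + 2) → ℤ)
    (hγ0 : ∀ j, γ j ≠ 0) (hsum : ∑ j, γ j = 0)
    (hgcd : Finset.univ.gcd γ = 1)
    (m : Fin (d + 2) → Fin d → ℤ)
    (hrel : ∀ r : Fin (d + 2) → ℤ,
      ((∑ j, r j = 0) ∧ (∀ i, ∑ j, r j * m j i = 0)) ↔ ∃ c : ℤ, r = c • γ)
    (hspan : ∀ k : Fin (d + 2),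
      Submodule.span ℤ {v : Fin d → ℤ | ∃ j, v = m j - m k} = ⊤)
    (u : Fin (d + 2) → ℂ) (hu : ∀ j, u j ≠ 0)
    (hdisc : (∏ j, u j ^ γ j) = (∏ j, (γ j : ℂ) ^ γ j)) :
    ∃! x : Fin d → ℂ, (∀ i, x i ≠ 0) ∧
      (∑ j, u j * ∏ i, x i ^ m j i) = 0 ∧
      ∀ i, (∑ j, (m j i : ℂ) * (u j * ∏ i', x i' ^ m j i')) = 0 := by
  have hγC : ∀ j, ((γ j : ℂ)) ≠ 0 := fun j => Int.cast_ne_zero.mpr (hγ0 j)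
  obtain ⟨hγsum', hγm⟩ := (hrel γ).mpr ⟨1, by simp⟩
  have hγmC : ∀ i, ∑ j, (γ j : ℂ) * (m j i : ℂ) = 0 := by
    intro i
    exact_mod_cast congrArg (Int.cast : ℤ → ℂ) (hγm i)
  have hγsumC : ∑ j, (γ j : ℂ) = 0 := by
    exact_mod_cast congrArg (Int.cast : ℤ → ℂ) hsum
  have hspanR : ∀ k, Submodule.span ℤ (Set.range (fun j => m j - m k)) = ⊤ := by
    intro k
    rw [← hspan k]
    congr 1
    ext v
    exact ⟨fun ⟨j, h⟩ => ⟨j, h.symm⟩, fun ⟨j, h⟩ => ⟨j, h.symm⟩⟩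
  have val_prod : ∀ {n : ℕ} (f : Fin n → ℂˣ), ((∏ j, f j : ℂˣ) : ℂ) = ∏ j, (f j : ℂ) :=
    fun f => map_prod (Units.coeHom ℂ) f univ
  -- the units
  set Γ : Fin (d+2) → ℂˣ := fun j => Units.mk0 _ (hγC j) with hΓ
  set U : Fin (d+2) → ℂˣ := fun j => Units.mk0 _ (hu j) with hU
  set w : Fin (d+2) → ℂˣ := fun j => Γ j * U 0 / (Γ 0 * U j) with hw
  have hw0 : w 0 = 1 := div_self' _
  have hΓU : (∏ j, Γ j ^ γ j) = ∏ j, U j ^ γ j := by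
    apply Units.ext
    rw [val_prod, val_prod]
    simp only [Units.val_zpow_eq_zpow_val, hΓ, hU, Units.val_mk0]
    exact hdisc.symm
  have hW : (∏ j, w j ^ γ j) = 1 := by
    have hsplit : ∀ j, w j ^ γ j = Γ j ^ γ j * U 0 ^ γ j / (Γ 0 ^ γ j * U j ^ γ j) := by
      intro j; rw [hw]; rw [div_zpow, mul_zpow, mul_zpow]
    rw [Finset.prod_congr rfl fun j _ => hsplit j, Finset.prod_div_distrib,
      Finset.prod_mul_distrib, Finset.prod_mul_distrib, hΓU,
      ← zpow_sum_aux, ← zpow_sum_aux, hsum, zpow_zero, zpow_zero, mul_one, one_mul,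
      div_self']
  -- uniqueness part
  have huniq : ∀ x y : Fin d → ℂ,
      ((∀ i, x i ≠ 0) ∧ (∑ j, u j * ∏ i, x i ^ m j i) = 0 ∧
        ∀ i, (∑ j, (m j i : ℂ) * (u j * ∏ i', x i' ^ m j i')) = 0) →
      ((∀ i, y i ≠ 0) ∧ (∑ j, u j * ∏ i, y i ^ m j i) = 0 ∧
        ∀ i, (∑ j, (m j i : ℂ) * (u j * ∏ i', y i' ^ m j i')) = 0) → x = y := by
    intro x y ⟨hx1, hx2, hx3⟩ ⟨hy1, hy2, hy3⟩
    have hprodx : ∀ j, (∏ i, x i ^ m j i) ≠ 0 := fun j =>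
      Finset.prod_ne_zero_iff.mpr fun i _ => zpow_ne_zero _ (hx1 i)
    have hprody : ∀ j, (∏ i, y i ^ m j i) ≠ 0 := fun j =>
      Finset.prod_ne_zero_iff.mpr fun i _ => zpow_ne_zero _ (hy1 i)
    obtain ⟨c, hc⟩ := ker_aux γ hγ0 m hrel (fun j => u j * ∏ i, x i ^ m j i) hx2
      (fun i =>
        Eq.trans (Finset.sum_congr rfl (fun j _ => mul_comm _ _)) (hx3 i))
    obtain ⟨c', hc'⟩ := ker_aux γ hγ0 m hrel (fun j => u j * ∏ i, y i ^ m j i) hy2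
      (fun i =>
        Eq.trans (Finset.sum_congr rfl (fun j _ => mul_comm _ _)) (hy3 i))
    have hcne : c ≠ 0 := by
      intro h
      have := hc 0
      rw [h, zero_mul] at this
      exact mul_ne_zero (hu 0) (hprodx 0) this
    have hc'ne : c' ≠ 0 := by
      intro h
      have := hc' 0
      rw [h, zero_mul] at this
      exact mul_ne_zero (hu 0) (hprody 0) this
    have hxval : ∀ j, (∏ i, x i ^ m j i) = c * (γ j : ℂ) / u j := by
      intro j
      rw [eq_div_iff (hu j), mul_comm _ (u j), hc j]
    have hyval : ∀ j, (∏ i, y i ^ m j i) = c' * (γ j : ℂ) / u j := by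
      intro j
      rw [eq_div_iff (hu j), mul_comm _ (u j), hc' j]
    set Xu : Fin d → ℂˣ := fun i => Units.mk0 (x i) (hx1 i) with hXu
    set Yu : Fin d → ℂˣ := fun i => Units.mk0 (y i) (hy1 i) with hYu
    set Z : Fin d → ℂˣ := fun i => Xu i / Yu i with hZ
    have hZval : ∀ j, ((∏ i, Z i ^ m j i : ℂˣ) : ℂ) = c / c' := by
      intro j
      rw [val_prod]
      have : ∀ i, ((Z i ^ m j i : ℂˣ) : ℂ) = x i ^ m j i / y i ^ m j i := by
        intro i
        rw [Units.val_zpow_eq_zpow_val]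
        simp only [hZ, hXu, hYu, Units.val_div_eq_div_val, Units.val_mk0]
        exact div_zpow _ _ _
      rw [Finset.prod_congr rfl fun i _ => this i, Finset.prod_div_distrib,
        hxval j, hyval j]
      rw [div_div_div_comm, div_self (hu j), div_one, mul_div_mul_comm,
        div_self (hγC j), mul_one]
    have hZ1 : ∀ j, (∏ i, Z i ^ ((m j - m 0) i)) = 1 := by
      intro j
      have hsplit : (∏ i, Z i ^ ((m j - m 0) i)) = (∏ i, Z i ^ m j i) / (∏ i, Z i ^ m 0 i) := by
        rw [← Finset.prod_div_distrib]
        exact Finset.prod_congr rfl fun i _ => by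
          simp only [Pi.sub_apply]; exact zpow_sub _ _ _
      apply Units.ext
      rw [hsplit, Units.val_div_eq_div_val, hZval j, hZval 0, Units.val_one, div_self]
      exact div_ne_zero hcne hc'ne
    funext i0
    have := span_kill_aux Z (fun j => m j - m 0) (hspanR 0) hZ1 i0
    have hxy : Xu i0 = Yu i0 := by
      rwa [hZ, div_eq_one] at this
    have := congrArg Units.val hxy
    simpa [hXu, hYu] using this
  -- existence
  obtain ⟨a, ha⟩ : ∃ a : Fin d → Fin (d+2) → ℤ,
      ∀ i0, ∑ j, a i0 j • (m j - m 0) = Pi.single i0 (1:ℤ) := by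
    have h := fun i0 : Fin d => (Submodule.mem_span_range_iff_exists_fun ℤ).mp
      (show (Pi.single i0 (1:ℤ) : Fin d → ℤ) ∈
          Submodule.span ℤ (Set.range fun j => m j - m 0) by rw [hspanR 0]; trivial)
    choose a ha using h
    exact ⟨a, ha⟩
  have ha' : ∀ (i0 : Fin d) (i'' : Fin d),
      ∑ j, a i0 j * (m j i'' - m 0 i'') = (Pi.single i0 (1:ℤ) : Fin d → ℤ) i'' := by
    intro i0 i''
    have := congrFun (ha i0) i''
    simpa [Finset.sum_apply] using this
  set X : Fin d → ℂˣ := fun i0 => ∏ j, w j ^ a i0 j with hX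
  have hXv : ∀ k, (∏ i, X i ^ (m k i - m 0 i)) = w k := by
    intro k
    set e : Fin d → ℤ := fun i => m k i - m 0 i with he
    set r : Fin (d+2) → ℤ := fun j => ∑ i, e i * a i j with hr
    have step1 : (∏ i, X i ^ e i) = ∏ j, w j ^ r j := (mon_sum_aux w e a).symm
    -- the exponent relation
    set s : Fin (d+2) → ℤ := fun j => r j - (Pi.single k (1:ℤ) : Fin (d+2) → ℤ) j with hs
    have hs_rel : ∀ i'', ∑ j, s j * (m j i'' - m 0 i'') = 0 := by
      intro i''
      have hr_part : ∑ j, r j * (m j i'' - m 0 i'') = e i'' := by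
        calc ∑ j, r j * (m j i'' - m 0 i'')
            = ∑ j, ∑ i, e i * a i j * (m j i'' - m 0 i'') := by
              refine Finset.sum_congr rfl fun j _ => ?_
              rw [hr, Finset.sum_mul]
          _ = ∑ i, e i * ∑ j, a i j * (m j i'' - m 0 i'') := by
              rw [Finset.sum_comm]
              refine Finset.sum_congr rfl fun i _ => ?_
              rw [Finset.mul_sum]
              exact Finset.sum_congr rfl fun j _ => by ring
          _ = ∑ i, e i * (Pi.single i (1:ℤ) : Fin d → ℤ) i'' := by
              exact Finset.sum_congr rfl fun i _ => by rw [ha' i i'']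
          _ = e i'' := by
              rw [Finset.sum_eq_single i'' (fun i _ hi => by
                simp [Pi.single_eq_of_ne (Ne.symm hi)]) (by simp)]
              simp
      have hsingle_part : ∑ j, (Pi.single k (1:ℤ) : Fin (d+2) → ℤ) j * (m j i'' - m 0 i'')
          = e i'' := by
        rw [Finset.sum_eq_single k (fun j _ hj => by simp [Pi.single_eq_of_ne hj]) (by simp)]
        simp [he]
      simp only [hs, sub_mul, Finset.sum_sub_distrib, hr_part, hsingle_part, sub_self]
    set S : ℤ := ∑ j, s j with hS
    set s' : Fin (d+2) → ℤ := fun j => s j - S * (Pi.single (0 : Fin (d+2)) (1:ℤ) : Fin (d+2) → ℤ) j with hs'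
    have hs'1 : ∑ j, s' j = 0 := by
      simp only [hs', Finset.sum_sub_distrib, ← Finset.mul_sum]
      rw [Finset.sum_eq_single (f := fun j => (Pi.single (0 : Fin (d+2)) (1:ℤ) : Fin (d+2) → ℤ) j) (0 : Fin (d+2)) (fun j _ hj => Pi.single_eq_of_ne hj _) (by simp)]
      simp [hS]
    have hs'2 : ∀ i, ∑ j, s' j * m j i = 0 := by
      intro i
      have h0 : ∑ j, s j * m j i = S * m 0 i := by
        have := hs_rel i
        simp only [mul_sub, Finset.sum_sub_distrib, sub_eq_zero] at this
        rw [this, ← Finset.sum_mul, ← hS]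
      simp only [hs', sub_mul, Finset.sum_sub_distrib, h0]
      rw [Finset.sum_eq_single (0 : Fin (d+2)) (fun j _ hj => by
        simp [Pi.single_eq_of_ne hj]) (by simp)]
      simp
    obtain ⟨cz, hcz⟩ := (hrel s').mp ⟨hs'1, hs'2⟩
    -- now compute the product
    have hr_decomp : ∀ j, r j = cz * γ j
        + S * (Pi.single (0 : Fin (d+2)) (1:ℤ) : Fin (d+2) → ℤ) j
        + (Pi.single k (1:ℤ) : Fin (d+2) → ℤ) j := by
      intro j
      have h1 := congrFun hcz j
      simp only [Pi.smul_apply, smul_eq_mul] at h1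
      have : s' j = s j - S * (Pi.single (0 : Fin (d+2)) (1:ℤ) : Fin (d+2) → ℤ) j := rfl
      rw [this] at h1
      have : s j = r j - (Pi.single k (1:ℤ) : Fin (d+2) → ℤ) j := rfl
      rw [this] at h1
      omega
    rw [show (∏ i, X i ^ (m k i - m 0 i)) = ∏ i, X i ^ e i from rfl, step1,
      Finset.prod_congr rfl fun j _ => by rw [hr_decomp j]]
    have expand : ∀ j : Fin (d+2), w j ^ (cz * γ j
          + S * (Pi.single (0 : Fin (d+2)) (1:ℤ) : Fin (d+2) → ℤ) j
          + (Pi.single k (1:ℤ) : Fin (d+2) → ℤ) j)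
        = (w j ^ γ j) ^ cz
          * (w j ^ ((Pi.single (0 : Fin (d+2)) (1:ℤ) : Fin (d+2) → ℤ) j)) ^ S
          * w j ^ ((Pi.single k (1:ℤ) : Fin (d+2) → ℤ) j) := by
      intro j
      rw [_root_.zpow_add, _root_.zpow_add, ← _root_.zpow_mul, ← _root_.zpow_mul]
      ring_nf
    rw [Finset.prod_congr rfl fun j _ => expand j, Finset.prod_mul_distrib,
      Finset.prod_mul_distrib, Finset.prod_zpow, Finset.prod_zpow, hW,
      prod_zpow_single_aux w k 1, prod_zpow_single_aux w (0 : Fin (d+2)) 1, hw0, zpow_one]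
    simp
  -- build the solution
  set x : Fin d → ℂ := fun i => (X i : ℂ) with hxdef
  have hx1 : ∀ i, x i ≠ 0 := fun i => (X i).ne_zero
  set P : Fin (d+2) → ℂˣ := fun k => ∏ i, X i ^ m k i with hP
  have hPw : ∀ k, P k = w k * P 0 := by
    intro k
    have hsplit : (∏ i, X i ^ (m k i - m 0 i)) = P k / P 0 := by
      rw [hP, ← Finset.prod_div_distrib]
      exact Finset.prod_congr rfl fun i _ => zpow_sub _ _ _
    have h := hXv k
    rw [hsplit, div_eq_iff_eq_mul] at h
    exact h
  have hprodval : ∀ k, (∏ i, x i ^ m k i) = ((P k : ℂˣ) : ℂ) := by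
    intro k
    rw [hP, val_prod]
    exact Finset.prod_congr rfl fun i _ => (Units.val_zpow_eq_zpow_val _ _).symm
  have hwval : ∀ k, ((w k : ℂˣ) : ℂ) = (γ k : ℂ) * u 0 / ((γ 0 : ℂ) * u k) := by
    intro k
    simp [hw, hΓ, hU]
  set Cv : ℂ := u 0 * ((P 0 : ℂˣ) : ℂ) / (γ 0 : ℂ) with hCv
  have hval : ∀ k, u k * (∏ i, x i ^ m k i) = (γ k : ℂ) * Cv := by
    intro k
    rw [hprodval k, hPw k, Units.val_mul, hwval k, hCv]
    field_simp [hu k, hγC 0]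
  refine existsUnique_of_exists_of_unique ⟨x, hx1, ?_, ?_⟩ huniq
  · rw [Finset.sum_congr rfl fun k _ => hval k, ← Finset.sum_mul, hγsumC, zero_mul]
  · intro i
    have : ∀ k : Fin (d+2), (m k i : ℂ) * (u k * ∏ i', x i' ^ m k i')
        = ((γ k : ℂ) * (m k i : ℂ)) * Cv := by
      intro k
      rw [hval k]
      ring
    rw [Finset.sum_congr rfl fun k _ => this k, ← Finset.sum_mul, hγmC i, zero_mul]
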